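/- (Proposition 1, part 1) For every n ≥ 1, every element of SA(n) other than S⁽ⁿ⁾S⁽ⁿ⁻¹⁾⋯S⁽¹⁾ has exactly 2^(n−1) entries equal to −1 and exactly 2^(n−1) entries equal to 1. -/

import Mathlib

noncomputable def Smat (k : ℕ) : Matrix (Fin (2 ^ (k + 1))) (Fin (2 ^ k)) ℝ :=
  Matrix.of fun i j =>
    if (i : ℕ) < 2 ^ k then (if (i : ℕ) = (j : ℕ) then 1 else 0)
    else (if (i : ℕ) + (j : ℕ) = 2 ^ (k + 1) - 1 then 1 else 0)

noncomputable def Amat (k : ℕ) : Matrix (Fin (2 ^ (k + 1))) (Fin (2 ^ k)) ℝ :=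
  Matrix.of fun i j =>
    if (i : ℕ) < 2 ^ k then (if (i : ℕ) = (j : ℕ) then -1 else 0)
    else (if (i : ℕ) + (j : ℕ) = 2 ^ (k + 1) - 1 then 1 else 0)

noncomputable def Fmat (b : Bool) (k : ℕ) : Matrix (Fin (2 ^ (k + 1))) (Fin (2 ^ k)) ℝ :=
  if b then Amat k else Smat k

noncomputable def prodVec : (n : ℕ) → (Fin n → Bool) → (Fin (2 ^ n) → ℝ)
  | 0, _ => fun _ => 1
  | n + 1, c => (Fmat (c (Fin.last n)) n).mulVec (prodVec n fun i => c i.castSucc)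

lemma Fmat_false (k : ℕ) : Fmat false k = Smat k := by simp [Fmat]
lemma Fmat_true (k : ℕ) : Fmat true k = Amat k := by simp [Fmat]

-- row structure lemma
lemma row_struct (b : Bool) (k : ℕ) (i : Fin (2 ^ (k+1))) :
    ∃ (j0 : Fin (2 ^ k)) (s : ℝ), (s = 1 ∨ s = -1) ∧
      ∀ j, Fmat b k i j = if j = j0 then s else 0 := by
  have hp : 0 < 2 ^ k := Nat.pow_pos (by norm_num)
  by_cases hi : (i : ℕ) < 2 ^ k
  · refine ⟨⟨i, hi⟩, if b then -1 else 1, by cases b <;> simp, fun j => ?_⟩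
    cases b <;> simp [Fmat_false, Fmat_true, Smat, Amat, hi, Fin.ext_iff, eq_comm]
  · have hi2 : (i : ℕ) < 2 ^ (k+1) := i.isLt
    have hle : 2 ^ k ≤ (i : ℕ) := Nat.le_of_not_lt hi
    have h2 : 2 ^ (k+1) = 2 ^ k + 2 ^ k := by ring
    refine ⟨⟨2 ^ (k+1) - 1 - i, by omega⟩, 1, Or.inl rfl, fun j => ?_⟩
    cases b <;> simp only [Fmat_false, Fmat_true, Smat, Amat, Matrix.of_apply, if_neg hi,
      Fin.ext_iff] <;>
    · have hj := j.isLt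
      by_cases h : (i : ℕ) + (j : ℕ) = 2 ^ (k+1) - 1
      · rw [if_pos h, if_pos (by omega)]
      · rw [if_neg h, if_neg (by omega)]

lemma mulVec_entry (b : Bool) (k : ℕ) (w : Fin (2^k) → ℝ) (i : Fin (2^(k+1))) :
    ∃ (j0 : Fin (2 ^ k)) (s : ℝ), (s = 1 ∨ s = -1) ∧
      (Fmat b k).mulVec w i = s * w j0 := by
  obtain ⟨j0, s, hs, hrow⟩ := row_struct b k i
  refine ⟨j0, s, hs, ?_⟩
  simp only [Matrix.mulVec, dotProduct, hrow, ite_mul, zero_mul]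
  simp

lemma entries_pm (n : ℕ) (c : Fin n → Bool) (i : Fin (2 ^ n)) :
    prodVec n c i = 1 ∨ prodVec n c i = -1 := by
  induction n with
  | zero => left; rfl
  | succ n ih =>
    obtain ⟨j0, s, hs, h⟩ := mulVec_entry (c (Fin.last n)) n (prodVec n fun i => c i.castSucc) i
    rw [show prodVec (n+1) c = (Fmat (c (Fin.last n)) n).mulVec (prodVec n fun i => c i.castSucc) from rfl, h]
    rcases hs with rfl | rfl <;> rcases ih (fun i => c i.castSucc) j0 with h2 | h2 <;> rw [h2] <;> norm_num

lemma colsum (b : Bool) (k : ℕ) (j : Fin (2 ^ k)) :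
    ∑ i, Fmat b k i j = if b then 0 else 2 := by
  have hj : (j : ℕ) < 2 ^ k := j.isLt
  have h2 : 2 ^ (k+1) = 2 ^ k + 2 ^ k := by ring
  set j1 : Fin (2 ^ (k+1)) := ⟨j, by omega⟩ with hj1
  set j2 : Fin (2 ^ (k+1)) := ⟨2 ^ (k+1) - 1 - j, by omega⟩ with hj2
  have hne : j1 ≠ j2 := by simp [hj1, hj2, Fin.ext_iff]; omega
  have key : ∀ i : Fin (2 ^ (k+1)), Fmat b k i j =
      (if i = j1 then (if b then (-1:ℝ) else 1) else 0) + (if i = j2 then 1 else 0) := by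
    intro i
    have hi2 : (i : ℕ) < 2 ^ (k+1) := i.isLt
    by_cases hi : (i : ℕ) < 2 ^ k
    · have h2' : i ≠ j2 := by simp [hj2, Fin.ext_iff]; omega
      have : (i = j1) ↔ ((i:ℕ) = (j:ℕ)) := by simp [hj1, Fin.ext_iff]
      cases b <;> simp [Fmat_false, Fmat_true, Smat, Amat, hi, h2', this]
    · have h1' : i ≠ j1 := by simp [hj1, Fin.ext_iff]; omega
      have : (i = j2) ↔ ((i:ℕ) + (j:ℕ) = 2 ^ (k+1) - 1) := by
        simp [hj2, Fin.ext_iff]; omega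
      cases b <;> simp [Fmat_false, Fmat_true, Smat, Amat, hi, h1', this]
  rw [Finset.sum_congr rfl (fun i _ => key i), Finset.sum_add_distrib,
    Finset.sum_ite_eq' Finset.univ j1, Finset.sum_ite_eq' Finset.univ j2]
  cases b <;> norm_num

lemma sum_mulVec (b : Bool) (k : ℕ) (w : Fin (2^k) → ℝ) :
    ∑ i, (Fmat b k).mulVec w i = if b then 0 else 2 * ∑ j, w j := by
  simp only [Matrix.mulVec, dotProduct]
  rw [Finset.sum_comm]
  have : ∀ j : Fin (2^k), ∑ i, Fmat b k i j * w j = (if b then 0 else 2) * w j := by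
    intro j; rw [← Finset.sum_mul, colsum]
  rw [Finset.sum_congr rfl (fun j _ => this j)]
  cases b <;> simp [Finset.mul_sum]

lemma sum_prodVec (n : ℕ) (c : Fin n → Bool) (h : ∃ i, c i = true) :
    ∑ i, prodVec n c i = 0 := by
  induction n with
  | zero => obtain ⟨i, _⟩ := h; exact absurd i.isLt (by omega)
  | succ n ih =>
    show ∑ i, (Fmat (c (Fin.last n)) n).mulVec (prodVec n fun i => c i.castSucc) i = 0
    rw [sum_mulVec]
    by_cases hl : c (Fin.last n) = true
    · simp [hl]
    · rw [if_neg (by simp_all)]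
      obtain ⟨i, hi⟩ := h
      have hil : i ≠ Fin.last n := fun he => hl (he ▸ hi)
      obtain ⟨i', rfl⟩ := Fin.exists_castSucc_eq.mpr hil
      rw [ih (fun i => c i.castSucc) ⟨i', hi⟩]
      ring

def SA (n : ℕ) : Set (Fin (2 ^ n) → ℝ) := { v | ∃ c : Fin n → Bool, v = prodVec n c }

/-- Proposition 1, part 1: every element of SA(n) other than
S⁽ⁿ⁾⋯S⁽¹⁾ has exactly 2^(n−1) entries equal to −1 and 2^(n−1) entries equal to 1. -/
theorem stmt1 (n : ℕ) (hn : 1 ≤ n) (v : Fin (2 ^ n) → ℝ) (hv : v ∈ SA n)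
    (hne : v ≠ prodVec n (fun _ => false)) :
    {i : Fin (2 ^ n) | v i = -1}.ncard = 2 ^ (n - 1) ∧
    {i : Fin (2 ^ n) | v i = 1}.ncard = 2 ^ (n - 1) := by
  classical
  obtain ⟨c, rfl⟩ := hv
  have hc : ∃ i, c i = true := by
    by_contra h
    push_neg at h
    have : c = fun _ => false := funext fun i => by simpa using h i
    exact hne (by rw [this])
  have hsum := sum_prodVec n c hc
  have hpm := entries_pm n c
  set v := prodVec n c with hv
  set A := Finset.univ.filter (fun i => v i = -1) with hA
  set B := Finset.univ.filter (fun i => v i = 1) with hB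
  have hAB : Finset.univ.filter (fun i => ¬ (v i = 1)) = A := by
    ext i
    simp only [Finset.mem_filter, Finset.mem_univ, true_and, hA]
    rcases hpm i with h | h <;> simp [h] <;> norm_num
  have hBsum : ∑ i ∈ B, v i = (B.card : ℝ) := by
    rw [Finset.sum_congr rfl (fun i hi => (Finset.mem_filter.mp hi).2)]
    simp
    rfl
  have hAsum : ∑ i ∈ A, v i = -(A.card : ℝ) := by
    rw [Finset.sum_congr rfl (fun i hi => (Finset.mem_filter.mp hi).2)]
    simp
    rfl
  have hsplit := Finset.sum_filter_add_sum_filter_not Finset.univ (fun i => v i = 1) v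
  rw [hAB, hsum, hBsum, hAsum] at hsplit
  have hcardeq : B.card = A.card := by
    have : (B.card : ℝ) = (A.card : ℝ) := by linarith
    exact_mod_cast this
  have hcardsum := Finset.card_filter_add_card_filter_not
    (s := Finset.univ) (p := fun i => v i = 1)
  rw [hAB] at hcardsum
  simp only [← hB, Finset.card_univ, Fintype.card_fin] at hcardsum
  have h2n : 2 ^ n = 2 ^ (n - 1) + 2 ^ (n - 1) := by
    rw [← two_mul, ← pow_succ', Nat.sub_add_cancel hn]
  have hAset : {i | v i = -1} = ↑A := by ext i; simp [hA]
  have hBset : {i | v i = 1} = ↑B := by ext i; simp [hB]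
  rw [hAset, hBset, Set.ncard_coe_finset, Set.ncard_coe_finset]
  omega
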